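/- Let n, r, d be natural numbers with n ≥ 1 and r ≥ 2. Let w : Fin (d+1) → Equiv.Perm (Fin r) be a non-degenerate tuple of permutations (i.e. w i ≠ w (i+1) for every adjacent pair of indices i). If for every pair of distinct elements j, k of Fin r the variation count μ_{j,k}(w) is strictly less than n, then d < n * r * (r - 1) / 2. (This is the degree bound for the arity-r component of the filtration stage 𝓔_n of the Barratt–Eccles operad: 𝓔_n(r) is concentrated in degrees ≥ 0 and < n·r·(r−1)/2.) -/

import Mathlib

open Classical in
/-- The variation count `μ_{j,k}` of a tuple of permutations: the number of indices `i`
such that the relative order in which `j` and `k` occur in the value sequence of `w i`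
differs from that of `w (i+1)`. -/
noncomputable def variationCount {r d : ℕ} (w : Fin (d + 1) → Equiv.Perm (Fin r))
    (j k : Fin r) : ℕ :=
  (Finset.univ.filter fun i : Fin d =>
    (((w i.castSucc)⁻¹ j < (w i.castSucc)⁻¹ k) ≠
      ((w i.succ)⁻¹ j < (w i.succ)⁻¹ k))).card

lemma perm_eq_of_order {r : ℕ} (σ τ : Equiv.Perm (Fin r))
    (h : ∀ j k : Fin r, (σ⁻¹ j < σ⁻¹ k ↔ τ⁻¹ j < τ⁻¹ k)) : σ = τ := by
  have hm : StrictMono (fun a => σ⁻¹ (τ a)) := by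
    intro a b hab
    exact (h (τ a) (τ b)).2 (by simpa using hab)
  have inst : WellFoundedLT (Fin r) := inferInstance
  have h1 : Function.Surjective (fun a => σ⁻¹ (τ a)) :=
    (σ⁻¹.surjective).comp τ.surjective
  have hid : (fun a => σ⁻¹ (τ a)) = id :=
    (@StrictMono.range_inj (Fin r) (Fin r) _ _ inst _ id hm strictMono_id).1
      (by rw [Set.range_id]; exact Set.range_eq_univ.2 h1)
  apply Equiv.ext
  intro x
  have h2 : σ⁻¹ (τ x) = x := congrFun hid x
  calc σ x = σ (σ⁻¹ (τ x)) := by rw [h2]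
    _ = τ x := by simp

lemma order_iff_swap {r : ℕ} (σ τ : Equiv.Perm (Fin r)) (j k : Fin r) (hjk : j ≠ k)
    (h : (σ⁻¹ k < σ⁻¹ j ↔ τ⁻¹ k < τ⁻¹ j)) :
    (σ⁻¹ j < σ⁻¹ k ↔ τ⁻¹ j < τ⁻¹ k) := by
  have h1 : σ⁻¹ j ≠ σ⁻¹ k := fun e => hjk (σ⁻¹.injective e)
  have h2 : τ⁻¹ j ≠ τ⁻¹ k := fun e => hjk (τ⁻¹.injective e)
  rcases lt_or_gt_of_ne h1 with h1' | h1' <;> rcases lt_or_gt_of_ne h2 with h2' | h2' <;>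
    simp_all [lt_asymm]

lemma swap_cond {r : ℕ} (σ τ : Equiv.Perm (Fin r)) (j k : Fin r) (hjk : j ≠ k)
    (h : ((σ⁻¹ j < σ⁻¹ k) ≠ (τ⁻¹ j < τ⁻¹ k))) :
    ((σ⁻¹ k < σ⁻¹ j) ≠ (τ⁻¹ k < τ⁻¹ j)) := by
  simp only [ne_eq, eq_iff_iff] at h ⊢
  intro hc
  exact h (order_iff_swap σ τ j k hjk hc)

lemma var_symm {r d : ℕ} (w : Fin (d + 1) → Equiv.Perm (Fin r)) (j k : Fin r) (hjk : j ≠ k) :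
    variationCount w j k = variationCount w k j := by
  unfold variationCount
  congr 1
  apply Finset.filter_congr
  intro i _
  constructor
  · intro h; exact swap_cond _ _ _ _ hjk h
  · intro h; exact swap_cond _ _ _ _ hjk.symm h

/-- The degree bound for the arity-`r` component of the filtration stage `𝓔_n` of the
Barratt–Eccles operad: a non-degenerate tuple of permutations all of whose pairwise
variation counts are `< n` has degree `d < n * r * (r - 1) / 2`. -/
theorem barrattEccles_En_degree_bound (n r d : ℕ) (hn : 1 ≤ n) (hr : 2 ≤ r)
    (w : Fin (d + 1) → Equiv.Perm (Fin r))
    (hw : ∀ i : Fin d, w i.castSucc ≠ w i.succ)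
    (hvar : ∀ j k : Fin r, j ≠ k → variationCount w j k < n) :
    d < n * r * (r - 1) / 2 := by
  classical
  set P : Finset (Fin r × Fin r) := Finset.univ.filter (fun p => p.1 < p.2) with hP
  set Q : Finset (Fin r × Fin r) := Finset.univ.filter (fun p => p.2 < p.1) with hQ
  have hcover : (Finset.univ : Finset (Fin d)) ⊆
      P.biUnion (fun p => Finset.univ.filter fun i : Fin d =>
        (((w i.castSucc)⁻¹ p.1 < (w i.castSucc)⁻¹ p.2) ≠
          ((w i.succ)⁻¹ p.1 < (w i.succ)⁻¹ p.2))) := by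
    intro i _
    rw [Finset.mem_biUnion]
    by_contra hcon
    push_neg at hcon
    apply hw i
    apply perm_eq_of_order
    intro j k
    rcases lt_trichotomy j k with hjk | rfl | hjk
    · have := hcon (j, k) (by simp [hP, hjk])
      simpa [ne_eq, eq_iff_iff, not_not] using this
    · simp
    · have := hcon (k, j) (by simp [hP, hjk])
      simp only [Finset.mem_filter, Finset.mem_univ, true_and, ne_eq, not_not,
        eq_iff_iff] at this
      exact order_iff_swap _ _ j k (ne_of_gt hjk) this
  have hd : d ≤ ∑ p ∈ P, variationCount w p.1 p.2 := by
    calc d = (Finset.univ : Finset (Fin d)).card := by simp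
      _ ≤ _ := Finset.card_le_card hcover
      _ ≤ _ := Finset.card_biUnion_le
  have hPQ : ∑ p ∈ Q, variationCount w p.1 p.2 = ∑ p ∈ P, variationCount w p.1 p.2 := by
    apply Finset.sum_equiv (Equiv.prodComm (Fin r) (Fin r))
    · intro p; simp [hP, hQ]
    · intro p hp
      simp only [hQ, Finset.mem_filter, Finset.mem_univ, true_and] at hp
      exact var_symm w p.1 p.2 (ne_of_gt hp)
  have hoff : (Finset.univ : Finset (Fin r)).offDiag = P ∪ Q := by
    ext p
    simp only [Finset.mem_offDiag, Finset.mem_union, hP, hQ, Finset.mem_filter,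
      Finset.mem_univ, true_and]
    exact ne_iff_lt_or_gt
  have hdisj : Disjoint P Q := by
    rw [Finset.disjoint_left]
    intro p hp hq
    simp only [hP, hQ, Finset.mem_filter, Finset.mem_univ, true_and] at hp hq
    exact absurd hq (not_lt_of_gt hp)
  have hsum : ∑ p ∈ (Finset.univ : Finset (Fin r)).offDiag, variationCount w p.1 p.2
      = 2 * ∑ p ∈ P, variationCount w p.1 p.2 := by
    rw [hoff, Finset.sum_union hdisj, hPQ]; ring
  have hbound : ∑ p ∈ (Finset.univ : Finset (Fin r)).offDiag, variationCount w p.1 p.2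
      ≤ (r * r - r) * (n - 1) := by
    have hle : ∀ p ∈ (Finset.univ : Finset (Fin r)).offDiag,
        variationCount w p.1 p.2 ≤ n - 1 := by
      intro p hp
      rw [Finset.mem_offDiag] at hp
      have := hvar p.1 p.2 hp.2.2
      omega
    calc _ ≤ ∑ _p ∈ (Finset.univ : Finset (Fin r)).offDiag, (n-1) :=
          Finset.sum_le_sum hle
      _ = (r * r - r) * (n - 1) := by
          rw [Finset.sum_const, smul_eq_mul, Finset.offDiag_card]
          simp
  have h2d : 2 * d ≤ (r * r - r) * (n - 1) := by
    calc 2 * d ≤ 2 * ∑ p ∈ P, variationCount w p.1 p.2 := by omega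
      _ = _ := hsum.symm
      _ ≤ _ := hbound
  -- arithmetic finish
  obtain ⟨c, hc⟩ : Even (r * (r - 1)) := Nat.even_mul_pred_self r
  have hrr : r * r - r = r * (r - 1) := by
    cases r with
    | zero => simp
    | succ m =>
      simp only [Nat.succ_sub_one]
      symm; apply Nat.eq_sub_of_add_eq; ring
  have h2c : 2 ≤ r * (r - 1) := by
    calc 2 = 2 * 1 := by norm_num
      _ ≤ r * (r - 1) := Nat.mul_le_mul hr (by omega)
  have hc1 : 1 ≤ c := by omega
  have hgoal : n * r * (r - 1) = 2 * (n * c) := by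
    rw [mul_assoc, hc]; ring
  rw [hgoal, Nat.mul_div_cancel_left _ (by norm_num : 0 < 2)]
  have hfin : (r * r - r) * (n - 1) = 2 * (n * c) - 2 * c := by
    rw [hrr, hc]
    cases n with
    | zero => omega
    | succ m =>
      simp only [Nat.succ_sub_one]
      symm; apply Nat.sub_eq_of_eq_add; ring
  have hgc : c ≤ n * c := Nat.le_mul_of_pos_left c hn
  omega
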